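/- If a nonnegative real vector x satisfies α·x ≥ 1 where α is a nonnegative coefficient vector, then the vector whose j-th coordinate is ⌊ρ·x_j⌋ with ρ = 1 + Σ_i α_i also satisfies α·⌊ρx⌋ ≥ 1. -/
import Mathlib


theorem stmt_0 (n : ℕ) (α x : Fin n → ℝ)
    (hα : ∀ i, 0 ≤ α i) (hx : ∀ i, 0 ≤ x i)
    (h : 1 ≤ ∑ i, α i * x i) :
    1 ≤ ∑ i, α i * (⌊(1 + ∑ j, α j) * x i⌋ : ℝ) := by
  set ρ : ℝ := 1 + ∑ j, α j with hρ
  have key : ∀ i, α i * (ρ * x i - 1) ≤ α i * (⌊ρ * x i⌋ : ℝ) := by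
    intro i
    exact mul_le_mul_of_nonneg_left (le_of_lt (Int.sub_one_lt_floor _)) (hα i)
  calc (1 : ℝ) = ρ * 1 - (ρ - 1) := by ring
    _ ≤ ρ * (∑ i, α i * x i) - (ρ - 1) := by
        have hρ0 : 0 ≤ ρ := by
          have : 0 ≤ ∑ j, α j := Finset.sum_nonneg fun j _ => hα j
          linarith
        nlinarith [mul_le_mul_of_nonneg_left h hρ0]
    _ = ∑ i, α i * (ρ * x i - 1) := by
        rw [Finset.mul_sum]
        have : ∑ i, α i * (ρ * x i - 1) = ∑ i, (ρ * (α i * x i) - α i) := by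
          exact Finset.sum_congr rfl fun i _ => by ring
        rw [this, Finset.sum_sub_distrib]
        simp [hρ]
    _ ≤ _ := Finset.sum_le_sum fun i _ => key i
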